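/- arXiv:1412.0958 — 3 statements merged into one kernel-verified Lean document; each statement's English description precedes it below -/
import Mathlib

section
/- Let $(X_\sigma)_{\sigma=1}^{2^N}$ be i.i.d. centered Gaussians of variance $N$. Then $\frac{1}{N}\max_{\sigma \le 2^N} X_\sigma \to \sqrt{2\log 2}$ in probability as $N \to \infty$. -/
open MeasureTheory ProbabilityTheory Real Filter
open scoped NNReal ENNReal

lemma gauss_upper (v : ℝ≥0) (hv : 0 < (v:ℝ)) (t : ℝ) (ht : 0 < t) :
    gaussianReal 0 v (Set.Ici t) ≤
      ENNReal.ofReal ((Real.sqrt (2 * π * v))⁻¹ * ((v:ℝ) / t) * Real.exp (-t ^ 2 / (2 * v))) := by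
  have hv0 : v ≠ 0 := by
    simpa using (show (0:ℝ) < v from hv).ne'
  rw [gaussianReal_apply_eq_integral 0 hv0]
  apply ENNReal.ofReal_le_ofReal
  have hb : 0 < t / (v:ℝ) := div_pos ht hv
  set C : ℝ := (Real.sqrt (2 * π * v))⁻¹ * Real.exp (t ^ 2 / (2 * v)) with hC
  have hbound : ∀ x ∈ Set.Ici t, gaussianPDFReal 0 v x ≤ C * Real.exp (-(t / v) * x) := by
    intro x _
    rw [gaussianPDFReal, hC]
    have h1 : rexp (-(x - 0) ^ 2 / (2 * v)) ≤ rexp (t ^ 2 / (2 * v)) * rexp (-(t / v) * x) := by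
      rw [← Real.exp_add, Real.exp_le_exp, div_le_iff₀ (by positivity : (0:ℝ) < 2 * v)]
      have hx : t ^ 2 / (2 * ↑v) * (2 * ↑v) = t ^ 2 := by field_simp
      have hy : -(t / ↑v) * x * (2 * ↑v) = -(2 * t * x) := by field_simp
      rw [add_mul, hx, hy]
      nlinarith [sq_nonneg (x - t)]
    calc (√(2 * π * ↑v))⁻¹ * rexp (-(x - 0) ^ 2 / (2 * ↑v))
        ≤ (√(2 * π * ↑v))⁻¹ * (rexp (t ^ 2 / (2 * v)) * rexp (-(t / v) * x)) := by
          apply mul_le_mul_of_nonneg_left h1 (inv_nonneg.2 (Real.sqrt_nonneg _))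
      _ = (√(2 * π * ↑v))⁻¹ * rexp (t ^ 2 / (2 * ↑v)) * rexp (-(t / ↑v) * x) := by ring
  have hint1 : IntegrableOn (gaussianPDFReal 0 v) (Set.Ici t) :=
    (integrable_gaussianPDFReal 0 v).integrableOn
  have hint2 : IntegrableOn (fun x => C * Real.exp (-(t / v) * x)) (Set.Ici t) := by
    rw [integrableOn_Ici_iff_integrableOn_Ioi]
    exact (exp_neg_integrableOn_Ioi t hb).const_mul C
  have key : ∫ x in Set.Ioi t, Real.exp (-(t / v) * x)
      = (t / v)⁻¹ * Real.exp (-(t / v) * t) := by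
    have h2 := MeasureTheory.integral_comp_mul_left_Ioi (fun x => Real.exp (-x)) t hb
    simp only [smul_eq_mul, ← neg_mul] at h2 ⊢
    rw [h2, integral_exp_neg_Ioi]; ring_nf
  have hexp : rexp (t ^ 2 / (2 * (v:ℝ))) * rexp (-(t / v) * t) = rexp (-t ^ 2 / (2 * v)) := by
    rw [← Real.exp_add]
    congr 1
    field_simp
    ring
  calc ∫ x in Set.Ici t, gaussianPDFReal 0 v x
      ≤ ∫ x in Set.Ici t, C * Real.exp (-(t / v) * x) :=
        setIntegral_mono_on hint1 hint2 measurableSet_Ici hbound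
    _ = C * ((t / v)⁻¹ * Real.exp (-(t / v) * t)) := by
        rw [MeasureTheory.integral_Ici_eq_integral_Ioi, MeasureTheory.integral_const_mul, key]
    _ = (Real.sqrt (2 * π * v))⁻¹ * ((v:ℝ) / t) * Real.exp (-t ^ 2 / (2 * v)) := by
        rw [hC, inv_div, ← hexp]; ring

lemma gauss_lower (v : ℝ≥0) (hv : 0 < (v:ℝ)) (a : ℝ) (ha : 0 ≤ a) :
    ENNReal.ofReal (gaussianPDFReal 0 v (a + 1)) ≤ gaussianReal 0 v (Set.Ici a) := by
  have hv0 : v ≠ 0 := by simpa using (show (0:ℝ) < v from hv).ne'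
  have h1 : gaussianReal 0 v (Set.Icc a (a + 1)) ≤ gaussianReal 0 v (Set.Ici a) :=
    measure_mono (fun x hx => hx.1)
  refine le_trans ?_ h1
  rw [gaussianReal_apply_eq_integral 0 hv0]
  apply ENNReal.ofReal_le_ofReal
  have hint1 : IntegrableOn (fun _ : ℝ => gaussianPDFReal 0 v (a + 1)) (Set.Icc a (a + 1)) :=
    integrableOn_const (by rw [Real.volume_Icc]; exact ENNReal.ofReal_ne_top)
  have hint2 : IntegrableOn (gaussianPDFReal 0 v) (Set.Icc a (a + 1)) :=
    (integrable_gaussianPDFReal 0 v).integrableOn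
  have hbound : ∀ x ∈ Set.Icc a (a + 1), gaussianPDFReal 0 v (a + 1) ≤ gaussianPDFReal 0 v x := by
    intro x hx
    rw [gaussianPDFReal, gaussianPDFReal]
    apply mul_le_mul_of_nonneg_left _ (inv_nonneg.2 (Real.sqrt_nonneg _))
    rw [Real.exp_le_exp, div_le_div_iff_of_pos_right (by positivity : (0:ℝ) < 2 * v)]
    have h0x : 0 ≤ x := le_trans ha hx.1
    nlinarith [hx.1, hx.2]
  calc gaussianPDFReal 0 v (a + 1)
      = ∫ _ in Set.Icc a (a + 1), gaussianPDFReal 0 v (a + 1) := by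
        rw [setIntegral_const, Measure.real, Real.volume_Icc, smul_eq_mul]
        rw [show a + 1 - a = 1 by ring, ENNReal.toReal_ofReal zero_le_one, one_mul]
    _ ≤ ∫ x in Set.Icc a (a + 1), gaussianPDFReal 0 v x :=
        setIntegral_mono_on hint1 hint2 measurableSet_Icc hbound

lemma two_pow_exp (N : ℕ) : (2:ℝ)^N = rexp (N * Real.log 2) := by
  rw [Real.exp_nat_mul, Real.exp_log two_pos]

lemma sqrt_ge_one (N : ℕ) (hN : 1 ≤ N) : 1 ≤ Real.sqrt (2 * π * N) := by
  rw [show (1:ℝ) = Real.sqrt 1 from Real.sqrt_one.symm]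
  apply Real.sqrt_le_sqrt
  have hNR : (1:ℝ) ≤ N := by exact_mod_cast hN
  nlinarith [Real.pi_gt_three]

lemma sqrt_le_3N (N : ℕ) (hN : 1 ≤ N) : Real.sqrt (2 * π * N) ≤ 3 * N := by
  have hNR : (1:ℝ) ≤ N := by exact_mod_cast hN
  rw [show (3:ℝ) * N = Real.sqrt ((3*N)^2) from (Real.sqrt_sq (by positivity)).symm]
  apply Real.sqrt_le_sqrt
  nlinarith [Real.pi_le_four]

lemma partA_real (β δ : ℝ) (hβ : 0 < β) (hδ : 0 < δ) (hβsq : β ^ 2 = 2 * Real.log 2)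
    (N : ℕ) (hN : 1 ≤ N) :
    (2:ℝ)^N * ((Real.sqrt (2 * π * N))⁻¹ * ((N:ℝ) / ((β + δ) * N)) *
        rexp (-((β + δ) * N) ^ 2 / (2 * N)))
      ≤ β⁻¹ * rexp (-((β * δ + δ ^ 2 / 2) * N)) := by
  have hNR : (0:ℝ) < N := by exact_mod_cast hN
  have hexp2 : (2:ℝ)^N * rexp (-((β + δ) * N) ^ 2 / (2 * N))
      = rexp (-((β * δ + δ ^ 2 / 2) * N)) := by
    rw [two_pow_exp, ← Real.exp_add]
    congr 1
    have hl : Real.log 2 = β ^ 2 / 2 := by linarith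
    rw [hl]
    field_simp
    ring
  have hpre : (Real.sqrt (2 * π * N))⁻¹ * ((N:ℝ) / ((β + δ) * N)) ≤ β⁻¹ := by
    have h1 : (Real.sqrt (2 * π * N))⁻¹ ≤ 1 := by
      rw [inv_le_one_iff₀]; right; exact sqrt_ge_one N hN
    have h2 : (N:ℝ) / ((β + δ) * N) = (β + δ)⁻¹ := by field_simp
    rw [h2]
    calc (Real.sqrt (2 * π * N))⁻¹ * (β + δ)⁻¹ ≤ 1 * (β + δ)⁻¹ := by
          apply mul_le_mul_of_nonneg_right h1 (by positivity)
      _ ≤ β⁻¹ := by rw [one_mul]; exact inv_anti₀ hβ (by linarith)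
  calc (2:ℝ)^N * ((Real.sqrt (2 * π * N))⁻¹ * ((N:ℝ) / ((β + δ) * N)) *
        rexp (-((β + δ) * N) ^ 2 / (2 * N)))
      = ((Real.sqrt (2 * π * N))⁻¹ * ((N:ℝ) / ((β + δ) * N))) *
        ((2:ℝ)^N * rexp (-((β + δ) * N) ^ 2 / (2 * N))) := by ring
    _ = ((Real.sqrt (2 * π * N))⁻¹ * ((N:ℝ) / ((β + δ) * N))) *
        rexp (-((β * δ + δ ^ 2 / 2) * N)) := by rw [hexp2]
    _ ≤ β⁻¹ * rexp (-((β * δ + δ ^ 2 / 2) * N)) :=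
        mul_le_mul_of_nonneg_right hpre (Real.exp_nonneg _)

lemma partB_real (β δ : ℝ) (hβ : 0 < β) (hδ : 0 < δ) (hδβ : δ < β)
    (hβsq : β ^ 2 = 2 * Real.log 2) (N : ℕ) (hN : 1 ≤ N) :
    rexp (-β - 1) / 3 * (rexp ((β * δ - δ ^ 2 / 2) * N) / N)
      ≤ (2:ℝ)^N * ((Real.sqrt (2 * π * N))⁻¹ * rexp (-((β - δ) * N + 1) ^ 2 / (2 * N))) := by
  have hNR : (0:ℝ) < N := by exact_mod_cast hN
  have hNR1 : (1:ℝ) ≤ N := by exact_mod_cast hN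
  have hexp2 : (2:ℝ)^N * rexp (-((β - δ) * N + 1) ^ 2 / (2 * N))
      = rexp ((β * δ - δ ^ 2 / 2) * N - (β - δ) - 1 / (2 * N)) := by
    rw [two_pow_exp, ← Real.exp_add]
    congr 1
    have hl : Real.log 2 = β ^ 2 / 2 := by linarith
    rw [hl]
    field_simp
    ring
  have hexp3 : rexp (-β - 1) * rexp ((β * δ - δ ^ 2 / 2) * N)
      ≤ rexp ((β * δ - δ ^ 2 / 2) * N - (β - δ) - 1 / (2 * N)) := by
    rw [← Real.exp_add, Real.exp_le_exp]
    have : 1 / (2 * (N:ℝ)) ≤ 1 := by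
      rw [div_le_one (by positivity)]; linarith
    linarith
  have hpre : (1:ℝ) / (3 * N) ≤ (Real.sqrt (2 * π * N))⁻¹ := by
    rw [show (1:ℝ) / (3 * N) = ((3:ℝ) * N)⁻¹ by ring]
    exact inv_anti₀ (by positivity) (sqrt_le_3N N hN)
  calc rexp (-β - 1) / 3 * (rexp ((β * δ - δ ^ 2 / 2) * N) / N)
      = (1 / (3 * N)) * (rexp (-β - 1) * rexp ((β * δ - δ ^ 2 / 2) * N)) := by ring
    _ ≤ (Real.sqrt (2 * π * N))⁻¹ * rexp ((β * δ - δ ^ 2 / 2) * N - (β - δ) - 1 / (2 * N)) := by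
        apply mul_le_mul hpre hexp3 (by positivity) (by positivity)
    _ = (2:ℝ)^N * ((Real.sqrt (2 * π * N))⁻¹ * rexp (-((β - δ) * N + 1) ^ 2 / (2 * N))) := by
        rw [show (2:ℝ)^N * ((Real.sqrt (2 * π * N))⁻¹ * rexp (-((β - δ) * N + 1) ^ 2 / (2 * N)))
          = (Real.sqrt (2 * π * N))⁻¹ * ((2:ℝ)^N * rexp (-((β - δ) * N + 1) ^ 2 / (2 * N))) by ring,
          hexp2]

lemma natmul_tendsto (c : ℝ) (hc : 0 < c) :
    Tendsto (fun N : ℕ => c * N) atTop atTop :=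
  (tendsto_natCast_atTop_atTop (R := ℝ)).const_mul_atTop hc

lemma limA (c K : ℝ) (hc : 0 < c) :
    Tendsto (fun N : ℕ => K * rexp (-(c * N))) atTop (nhds 0) := by
  have h1 : Tendsto (fun N : ℕ => -(c * N)) atTop atBot :=
    tendsto_neg_atBot_iff.mpr (natmul_tendsto c hc)
  have h2 : Tendsto (fun N : ℕ => rexp (-(c * N))) atTop (nhds 0) :=
    Real.tendsto_exp_atBot.comp h1
  simpa using h2.const_mul K

lemma limT (c K : ℝ) (hc : 0 < c) (hK : 0 < K) :
    Tendsto (fun N : ℕ => K * (rexp (c * N) / N)) atTop atTop := by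
  have g : Tendsto (fun x : ℝ => rexp x / x) atTop atTop := by
    simpa using Real.tendsto_exp_div_pow_atTop 1
  have h1 : Tendsto (fun N : ℕ => rexp (c * N) / (c * N)) atTop atTop :=
    g.comp (natmul_tendsto c hc)
  have h2 := h1.const_mul_atTop (show (0:ℝ) < K * c by positivity)
  apply h2.congr
  intro N
  rcases Nat.eq_zero_or_pos N with h | h
  · simp [h]
  · have hN : (0:ℝ) < N := by exact_mod_cast h
    field_simp

lemma pdf_nat (N : ℕ) (x : ℝ) :
    gaussianPDFReal 0 (N:ℝ≥0) x = (Real.sqrt (2 * π * N))⁻¹ * rexp (-x ^ 2 / (2 * N)) := by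
  simp [gaussianPDFReal]

lemma rem_key (Ω : Type) [MeasureSpace Ω] [IsProbabilityMeasure (ℙ : Measure Ω)]
    (X : (N : ℕ) → Fin (2 ^ N) → Ω → ℝ)
    (hmeas : ∀ N σ, Measurable (X N σ))
    (hindep : ∀ N, iIndepFun (X N) ℙ)
    (hlaw : ∀ N σ, Measure.map (X N σ) ℙ = gaussianReal 0 N)
    (δ : ℝ) (hδ : 0 < δ) (hδβ : δ < Real.sqrt (2 * Real.log 2)) :
    Tendsto (fun N : ℕ =>
        ℙ {ω | δ < |(1 / (N : ℝ)) * (⨆ σ, X N σ ω) - Real.sqrt (2 * Real.log 2)|})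
      atTop (nhds 0) := by
  have hlog2 : 0 < Real.log 2 := Real.log_pos one_lt_two
  set β := Real.sqrt (2 * Real.log 2) with hβdef
  have hβ : 0 < β := Real.sqrt_pos.mpr (by linarith)
  have hβsq : β ^ 2 = 2 * Real.log 2 := Real.sq_sqrt (by linarith)
  set a : ℕ → ℝ := fun N => β⁻¹ * rexp (-((β * δ + δ ^ 2 / 2) * N)) with ha_def
  set p : ℕ → ℝ := fun N => gaussianPDFReal 0 (N:ℝ≥0) ((β - δ) * N + 1) with hp_def
  set b : ℕ → ℝ := fun N => rexp (-((2:ℝ) ^ N * p N)) with hb_def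
  -- main per-N bound
  have hmain : ∀ N : ℕ, 1 ≤ N →
      ℙ {ω | δ < |(1 / (N : ℝ)) * (⨆ σ, X N σ ω) - β|} ≤ ENNReal.ofReal (a N + b N) := by
    intro N hN
    haveI hne : Nonempty (Fin (2 ^ N)) := ⟨⟨0, by positivity⟩⟩
    have hNR : (0:ℝ) < N := by exact_mod_cast hN
    have hvpos : 0 < ((N:ℝ≥0):ℝ) := by simpa using hNR
    set tp : ℝ := (β + δ) * N with htp_def
    set tm : ℝ := (β - δ) * N with htmdef
    have htp : 0 < tp := by positivity
    have htm : 0 ≤ tm := mul_nonneg (by linarith) hNR.le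
    have hBdd : ∀ ω, BddAbove (Set.range fun σ => X N σ ω) :=
      fun ω => Set.Finite.bddAbove (Set.finite_range _)
    have hsub : {ω | δ < |(1 / (N : ℝ)) * (⨆ σ, X N σ ω) - β|} ⊆
        (⋃ σ, X N σ ⁻¹' Set.Ioi tp) ∪ (⋂ σ, X N σ ⁻¹' Set.Iio tm) := by
      intro ω hω
      simp only [Set.mem_setOf_eq] at hω
      have h3 : (1 / (N:ℝ)) * (⨆ σ, X N σ ω) * N = ⨆ σ, X N σ ω := by
        field_simp
      rcases lt_abs.mp hω with h | h
      · left
        have hM : tp < ⨆ σ, X N σ ω := by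
          have h2 : (β + δ) * N < (1 / (N:ℝ)) * (⨆ σ, X N σ ω) * N :=
            mul_lt_mul_of_pos_right (by linarith) hNR
          rwa [h3] at h2
        obtain ⟨σ, hσ⟩ := (lt_ciSup_iff (hBdd ω)).mp hM
        exact Set.mem_iUnion.2 ⟨σ, hσ⟩
      · right
        have hM : (⨆ σ, X N σ ω) < tm := by
          have h2 : (1 / (N:ℝ)) * (⨆ σ, X N σ ω) * N < (β - δ) * N :=
            mul_lt_mul_of_pos_right (by linarith) hNR
          rwa [h3] at h2
        exact Set.mem_iInter.2 fun σ => lt_of_le_of_lt (le_ciSup (hBdd ω) σ) hM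
    have hlawapp : ∀ (σ : Fin (2^N)) (s : Set ℝ), MeasurableSet s →
        ℙ (X N σ ⁻¹' s) = gaussianReal 0 (N:ℝ≥0) s := by
      intro σ s hs
      rw [← hlaw N σ, Measure.map_apply (hmeas N σ) hs]
    -- part A
    have hA : ℙ (⋃ σ, X N σ ⁻¹' Set.Ioi tp) ≤ ENNReal.ofReal (a N) := by
      have hU : gaussianReal 0 (N:ℝ≥0) (Set.Ici tp) ≤
          ENNReal.ofReal ((Real.sqrt (2 * π * N))⁻¹ * ((N:ℝ) / tp) *
            rexp (-tp ^ 2 / (2 * N))) := by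
        have := gauss_upper (N:ℝ≥0) hvpos tp htp
        simpa using this
      calc ℙ (⋃ σ, X N σ ⁻¹' Set.Ioi tp)
          ≤ ∑' σ : Fin (2^N), ℙ (X N σ ⁻¹' Set.Ioi tp) := measure_iUnion_le _
        _ = ∑' _ : Fin (2^N), gaussianReal 0 (N:ℝ≥0) (Set.Ioi tp) := by
            congr 1; funext σ; exact hlawapp σ _ measurableSet_Ioi
        _ ≤ ∑' _ : Fin (2^N), ENNReal.ofReal ((Real.sqrt (2 * π * N))⁻¹ * ((N:ℝ) / tp) *
              rexp (-tp ^ 2 / (2 * N))) := by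
            apply ENNReal.tsum_le_tsum
            intro σ
            exact le_trans (measure_mono Set.Ioi_subset_Ici_self) hU
        _ = ((2^N : ℕ) : ℝ≥0∞) * ENNReal.ofReal ((Real.sqrt (2 * π * N))⁻¹ * ((N:ℝ) / tp) *
              rexp (-tp ^ 2 / (2 * N))) := by
            rw [tsum_fintype]
            simp [Finset.sum_const, Finset.card_univ, nsmul_eq_mul]
        _ = ENNReal.ofReal ((2:ℝ)^N * ((Real.sqrt (2 * π * N))⁻¹ * ((N:ℝ) / tp) *
              rexp (-tp ^ 2 / (2 * N)))) := by
            rw [← ENNReal.ofReal_natCast (2^N), ← ENNReal.ofReal_mul (by positivity)]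
            push_cast
            ring_nf
        _ ≤ ENNReal.ofReal (a N) := by
            apply ENNReal.ofReal_le_ofReal
            rw [htp_def, ha_def]
            exact partA_real β δ hβ hδ hβsq N hN
    -- part B
    have hp0 : 0 ≤ p N := gaussianPDFReal_nonneg _ _ _
    have hlow : ENNReal.ofReal (p N) ≤ gaussianReal 0 (N:ℝ≥0) (Set.Ici tm) := by
      have := gauss_lower (N:ℝ≥0) hvpos tm htm
      simpa [hp_def, htmdef] using this
    have hp1 : p N ≤ 1 := by
      have h2 : ENNReal.ofReal (p N) ≤ 1 :=
        le_trans hlow prob_le_one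
      exact (ENNReal.ofReal_le_one).mp h2
    have hB : ℙ (⋂ σ, X N σ ⁻¹' Set.Iio tm) ≤ ENNReal.ofReal (b N) := by
      rw [(hindep N).meas_iInter (fun σ => ⟨Set.Iio tm, measurableSet_Iio, rfl⟩)]
      have heach : ∀ σ : Fin (2^N), ℙ (X N σ ⁻¹' Set.Iio tm) = gaussianReal 0 (N:ℝ≥0) (Set.Iio tm) :=
        fun σ => hlawapp σ _ measurableSet_Iio
      have hq : gaussianReal 0 (N:ℝ≥0) (Set.Iio tm) ≤ ENNReal.ofReal (1 - p N) := by
        rw [show Set.Iio tm = (Set.Ici tm)ᶜ from (Set.compl_Ici (a := tm)).symm,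
          measure_compl measurableSet_Ici (measure_ne_top _ _), measure_univ]
        calc (1 : ℝ≥0∞) - gaussianReal 0 (N:ℝ≥0) (Set.Ici tm)
            ≤ 1 - ENNReal.ofReal (p N) := tsub_le_tsub_left hlow 1
          _ = ENNReal.ofReal (1 - p N) := by
              rw [← ENNReal.ofReal_one, ← ENNReal.ofReal_sub _ hp0]
      calc ∏ σ : Fin (2^N), ℙ (X N σ ⁻¹' Set.Iio tm)
          = gaussianReal 0 (N:ℝ≥0) (Set.Iio tm) ^ (2^N) := by
            rw [Finset.prod_congr rfl (fun σ _ => heach σ), Finset.prod_const,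
              Finset.card_univ, Fintype.card_fin]
        _ ≤ ENNReal.ofReal (1 - p N) ^ (2^N) := by gcongr
        _ = ENNReal.ofReal ((1 - p N) ^ (2^N)) := by
            rw [← ENNReal.ofReal_pow (by linarith)]
        _ ≤ ENNReal.ofReal (b N) := by
            apply ENNReal.ofReal_le_ofReal
            have h1 : 1 - p N ≤ rexp (-(p N)) := by
              have := Real.add_one_le_exp (-(p N)); linarith
            calc (1 - p N) ^ (2^N) ≤ rexp (-(p N)) ^ (2^N) :=
                  pow_le_pow_left₀ (by linarith) h1 _
              _ = rexp (((2^N : ℕ) : ℝ) * -(p N)) := (Real.exp_nat_mul _ _).symm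
              _ = b N := by rw [hb_def]; push_cast; ring_nf
    calc ℙ {ω | δ < |(1 / (N : ℝ)) * (⨆ σ, X N σ ω) - β|}
        ≤ ℙ ((⋃ σ, X N σ ⁻¹' Set.Ioi tp) ∪ (⋂ σ, X N σ ⁻¹' Set.Iio tm)) := measure_mono hsub
      _ ≤ ℙ (⋃ σ, X N σ ⁻¹' Set.Ioi tp) + ℙ (⋂ σ, X N σ ⁻¹' Set.Iio tm) := measure_union_le _ _
      _ ≤ ENNReal.ofReal (a N) + ENNReal.ofReal (b N) := add_le_add hA hB
      _ = ENNReal.ofReal (a N + b N) := by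
          rw [← ENNReal.ofReal_add (by positivity) (by positivity)]
  -- limits
  have hcp : 0 < β * δ + δ ^ 2 / 2 := by positivity
  have hc' : 0 < β * δ - δ ^ 2 / 2 := by nlinarith
  have ha : Tendsto a atTop (nhds 0) := limA _ _ hcp
  have hT : Tendsto (fun N : ℕ => (2:ℝ) ^ N * p N) atTop atTop := by
    apply tendsto_atTop_mono' atTop ?_ (limT (β * δ - δ ^ 2 / 2) (rexp (-β - 1) / 3) hc' (by positivity))
    filter_upwards [eventually_ge_atTop 1] with N hN
    rw [hp_def]
    simp only
    rw [pdf_nat]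
    exact partB_real β δ hβ hδ hδβ hβsq N hN
  have hb : Tendsto b atTop (nhds 0) := by
    apply Real.tendsto_exp_atBot.comp
    exact tendsto_neg_atBot_iff.mpr hT
  have hub : Tendsto (fun N => ENNReal.ofReal (a N + b N)) atTop (nhds 0) := by
    have h0 : Tendsto (fun N => a N + b N) atTop (nhds 0) := by
      simpa using ha.add hb
    have := ENNReal.tendsto_ofReal h0
    simpa using this
  apply tendsto_of_tendsto_of_tendsto_of_le_of_le' tendsto_const_nhds hub
  · exact Eventually.of_forall fun _ => zero_le
  · exact eventually_atTop.2 ⟨1, hmain⟩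

/-- REM leading order: `N⁻¹ max_σ X_σ → √(2 log 2)` in probability. -/
theorem stmt3
    (Ω : Type) [MeasureSpace Ω] [IsProbabilityMeasure (ℙ : Measure Ω)]
    (X : (N : ℕ) → Fin (2 ^ N) → Ω → ℝ)
    (hmeas : ∀ N σ, Measurable (X N σ))
    (hindep : ∀ N, iIndepFun (X N) ℙ)
    (hlaw : ∀ N σ, Measure.map (X N σ) ℙ = gaussianReal 0 N) :
    ∀ ε : ℝ, 0 < ε →
      Tendsto (fun N : ℕ =>
          ℙ {ω | ε < |(1 / (N : ℝ)) * (⨆ σ, X N σ ω) - Real.sqrt (2 * Real.log 2)|})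
        atTop (nhds 0) := by
  intro ε hε
  have hlog2 : 0 < Real.log 2 := Real.log_pos one_lt_two
  have hβ : 0 < Real.sqrt (2 * Real.log 2) := Real.sqrt_pos.mpr (by linarith)
  set δ : ℝ := min ε (Real.sqrt (2 * Real.log 2) / 2) with hδdef
  have hδ : 0 < δ := lt_min hε (by linarith)
  have hδβ : δ < Real.sqrt (2 * Real.log 2) :=
    lt_of_le_of_lt (min_le_right _ _) (by linarith)
  have hδε : δ ≤ ε := min_le_left _ _
  have key := rem_key Ω X hmeas hindep hlaw δ hδ hδβ
  apply tendsto_of_tendsto_of_tendsto_of_le_of_le tendsto_const_nhds key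
  · exact fun _ => zero_le
  · intro N
    apply measure_mono
    intro ω hω
    exact lt_of_le_of_lt hδε hω
end

section
/- Let $a_1, a_2 > 0$ with $a_1 + a_2 = 1$ and $a_1 \le a_2$. Then the maximum of $\lambda_1 + \lambda_2$ over all $(\lambda_1,\lambda_2) \in \mathbb{R}^2$ satisfying $\frac{\lambda_1^2}{2a_1} \le \frac{1}{2}\log 2$ and $\frac{\lambda_1^2}{2a_1} + \frac{\lambda_2^2}{2a_2} \le \log 2$ equals $\sqrt{2\log 2}$, attained at $\lambda_1 = \sqrt{2\log 2}\,a_1$, $\lambda_2 = \sqrt{2\log 2}\,a_2$. -/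
open Real

/-- GREM(2) optimization, regime `a₁ ≤ a₂`: the constrained maximum of `λ₁ + λ₂`
equals `√(2 log 2)`, attained at `λᵢ = √(2 log 2) aᵢ`. -/
theorem stmt4 (a₁ a₂ : ℝ) (h₁ : 0 < a₁) (h₂ : 0 < a₂) (hsum : a₁ + a₂ = 1)
    (hle : a₁ ≤ a₂) :
    IsGreatest {s : ℝ | ∃ l₁ l₂ : ℝ, s = l₁ + l₂ ∧
        l₁ ^ 2 / (2 * a₁) ≤ (1 / 2) * Real.log 2 ∧
        l₁ ^ 2 / (2 * a₁) + l₂ ^ 2 / (2 * a₂) ≤ Real.log 2}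
      (Real.sqrt (2 * Real.log 2))
    ∧ ((Real.sqrt (2 * Real.log 2) * a₁) ^ 2 / (2 * a₁) ≤ (1 / 2) * Real.log 2
      ∧ (Real.sqrt (2 * Real.log 2) * a₁) ^ 2 / (2 * a₁)
          + (Real.sqrt (2 * Real.log 2) * a₂) ^ 2 / (2 * a₂) ≤ Real.log 2
      ∧ Real.sqrt (2 * Real.log 2) * a₁ + Real.sqrt (2 * Real.log 2) * a₂
          = Real.sqrt (2 * Real.log 2)) := by
  have hL : 0 < Real.log 2 := Real.log_pos (by norm_num)
  have h2L : (0:ℝ) ≤ 2 * Real.log 2 := by linarith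
  have hsq : Real.sqrt (2 * Real.log 2) ^ 2 = 2 * Real.log 2 := Real.sq_sqrt h2L
  have ha12 : a₁ ≤ 1/2 := by linarith
  have hc1 : (Real.sqrt (2 * Real.log 2) * a₁) ^ 2 / (2 * a₁) ≤ (1 / 2) * Real.log 2 := by
    rw [mul_pow, hsq, div_le_iff₀ (by positivity)]
    nlinarith [mul_nonneg (mul_nonneg hL.le h₁.le) (by linarith : (0:ℝ) ≤ 1 - 2*a₁)]
  have hc2 : (Real.sqrt (2 * Real.log 2) * a₁) ^ 2 / (2 * a₁)
          + (Real.sqrt (2 * Real.log 2) * a₂) ^ 2 / (2 * a₂) ≤ Real.log 2 := by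
    have e1 : (Real.sqrt (2 * Real.log 2) * a₁) ^ 2 / (2 * a₁) = Real.log 2 * a₁ := by
      rw [mul_pow, hsq]; field_simp
    have e2 : (Real.sqrt (2 * Real.log 2) * a₂) ^ 2 / (2 * a₂) = Real.log 2 * a₂ := by
      rw [mul_pow, hsq]; field_simp
    rw [e1, e2]; nlinarith
  refine ⟨⟨⟨_, _, (by rw [← mul_add, hsum, mul_one]), hc1, hc2⟩, ?_⟩, hc1, hc2, by
    rw [← mul_add, hsum, mul_one]⟩
  rintro s ⟨l₁, l₂, rfl, _, hC⟩
  have key : (l₁ + l₂) ^ 2 ≤ 2 * Real.log 2 := by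
    have h1 : l₁ ^ 2 / (2 * a₁) = l₁ ^ 2 / (2 * a₁) := rfl
    have hA : l₁ ^ 2 * a₂ + l₂ ^ 2 * a₁ ≤ Real.log 2 * (2 * a₁ * a₂) := by
      have := hC
      rw [div_add_div _ _ (by positivity) (by positivity), div_le_iff₀ (by positivity)] at this
      nlinarith
    have ha2 : a₂ = 1 - a₁ := by linarith
    subst ha2
    have h4 : (l₁ + l₂) ^ 2 * (a₁ * (1 - a₁)) ≤ (2 * Real.log 2) * (a₁ * (1 - a₁)) := by
      nlinarith [sq_nonneg (l₁ * (1 - a₁) - l₂ * a₁)]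
    exact le_of_mul_le_mul_right h4 (mul_pos h₁ h₂)
  calc l₁ + l₂ ≤ |l₁ + l₂| := le_abs_self _
    _ = Real.sqrt ((l₁ + l₂) ^ 2) := (Real.sqrt_sq_eq_abs _).symm
    _ ≤ Real.sqrt (2 * Real.log 2) := Real.sqrt_le_sqrt key
end

section
/- For $K \in \mathbb{N}$, $K \ge 1$, the supremum of $\sum_{j=1}^K \lambda_j$ over $(\lambda_1,\dots,\lambda_K) \in \mathbb{R}^K$ subject to $\sum_{j=1}^L \frac{K \lambda_j^2}{2} \le \frac{L}{K}\log 2$ for every $L = 1,\dots,K$, equals $\sqrt{2\log 2}$, attained at $\lambda_j = \sqrt{2\log 2}/K$ for all $j$. -/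
open Real

lemma card_filter_lt_fin (K L : ℕ) (h : L ≤ K) :
    (Finset.univ.filter (fun j : Fin K => (j : ℕ) < L)).card = L := by
  have : (Finset.univ.filter (fun j : Fin K => (j:ℕ) < L)) =
      (Finset.range L).attachFin (fun m hm => lt_of_lt_of_le (Finset.mem_range.mp hm) h) := by
    ext j; simp
  rw [this, Finset.card_attachFin, Finset.card_range]

/-- Critical GREM(K) variational principle: the supremum of `∑ λⱼ` under the
cumulative constraints `∑_{j<L} K λⱼ²/2 ≤ (L/K) log 2` equals `√(2 log 2)`,
attained at `λⱼ = √(2 log 2)/K` for all `j`. -/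
theorem stmt6 (K : ℕ) (hK : 1 ≤ K) :
    IsGreatest {s : ℝ | ∃ lam : Fin K → ℝ, s = ∑ j, lam j ∧
        ∀ L : ℕ, 1 ≤ L → L ≤ K →
          ∑ j ∈ Finset.univ.filter (fun j : Fin K => (j : ℕ) < L),
              (K : ℝ) * (lam j) ^ 2 / 2 ≤ ((L : ℝ) / K) * Real.log 2}
      (Real.sqrt (2 * Real.log 2))
    ∧ ((∑ _j : Fin K, Real.sqrt (2 * Real.log 2) / K = Real.sqrt (2 * Real.log 2))
      ∧ ∀ L : ℕ, 1 ≤ L → L ≤ K →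
          ∑ j ∈ Finset.univ.filter (fun j : Fin K => (j : ℕ) < L),
              (K : ℝ) * (Real.sqrt (2 * Real.log 2) / K) ^ 2 / 2
            ≤ ((L : ℝ) / K) * Real.log 2) := by
  have hK0 : (K : ℝ) ≠ 0 := Nat.cast_ne_zero.mpr (by omega)
  have hlog : 0 ≤ Real.log 2 := Real.log_nonneg one_le_two
  set c : ℝ := Real.sqrt (2 * Real.log 2) with hc
  have hc2 : c ^ 2 = 2 * Real.log 2 := Real.sq_sqrt (by positivity)
  have hsum : ∑ _j : Fin K, c / K = c := by
    rw [Finset.sum_const, Finset.card_univ, Fintype.card_fin, nsmul_eq_mul]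
    field_simp
  have hcons : ∀ L : ℕ, 1 ≤ L → L ≤ K →
      ∑ j ∈ Finset.univ.filter (fun j : Fin K => (j : ℕ) < L),
          (K : ℝ) * (c / K) ^ 2 / 2 ≤ ((L : ℝ) / K) * Real.log 2 := by
    intro L _ hLK
    rw [Finset.sum_const, card_filter_lt_fin K L hLK, nsmul_eq_mul]
    apply le_of_eq
    rw [div_pow, hc2]
    field_simp
  refine ⟨⟨⟨fun _ => c / K, hsum.symm, hcons⟩, ?_⟩, hsum, hcons⟩
  rintro s ⟨lam, rfl, hlam⟩
  have h1 := hlam K hK le_rfl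
  have hfil : Finset.univ.filter (fun j : Fin K => (j : ℕ) < K) = Finset.univ := by
    ext j; simp [j.isLt]
  rw [hfil, div_self hK0, one_mul] at h1
  -- from h1 : ∑ K * lam j ^2 / 2 ≤ log 2
  have hKpos : (0:ℝ) < K := by positivity
  have h2 : ∑ j, (lam j) ^ 2 ≤ 2 * Real.log 2 / K := by
    have heq : ∑ j, (K : ℝ) * (lam j) ^ 2 / 2 = (K : ℝ) * (∑ j, (lam j) ^ 2) / 2 := by
      rw [Finset.mul_sum, Finset.sum_div]
    rw [heq] at h1
    rw [le_div_iff₀ hKpos]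
    nlinarith
  have hCS : (∑ j, lam j) ^ 2 ≤ (K : ℝ) * ∑ j, (lam j) ^ 2 := by
    have := sq_sum_le_card_mul_sum_sq (s := (Finset.univ : Finset (Fin K))) (f := lam)
    simpa [Finset.card_univ] using this
  have hfin : (∑ j, lam j) ^ 2 ≤ 2 * Real.log 2 := by
    calc (∑ j, lam j) ^ 2 ≤ (K : ℝ) * ∑ j, (lam j) ^ 2 := hCS
      _ ≤ (K : ℝ) * (2 * Real.log 2 / K) := by
          apply mul_le_mul_of_nonneg_left h2 (by positivity)
      _ = 2 * Real.log 2 := by field_simp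
  calc ∑ j, lam j ≤ |∑ j, lam j| := le_abs_self _
    _ = Real.sqrt ((∑ j, lam j) ^ 2) := (Real.sqrt_sq_eq_abs _).symm
    _ ≤ c := Real.sqrt_le_sqrt hfin
end
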